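/- Let z ∈ ℂ with z ≠ 0 and let β₁, β₂ > 0 satisfy the strict triangle inequalities |β₁ − β₂| < |z| < β₁ + β₂. Then the set of pairs (u, v) of complex numbers with |u| = 1, |v| = 1 and β₁u + β₂v = z has exactly two elements, and the two solution pairs are mapped to each other by reflection across the direction of z (i.e., (u, v) ↦ ((z/|z|)²·conj(u), (z/|z|)²·conj(v))). Consequently, for a fixed Hopf frequency ω > 0 in this regime, the delay pairs (τ₁, τ₂) solving χ(iω) = 0 form, modulo 2π/ω in each component, exactly two branches. -/

import Mathlib

/-- The characteristic function `χ(λ) = λ² + α₁λ + α₀ + β₁·exp(−λτ₁) + β₂·exp(−λτ₂)`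
of the linearized two-delay glucose–insulin model. -/
noncomputable def chi (α₀ α₁ β₁ β₂ τ₁ τ₂ : ℝ) (lam : ℂ) : ℂ :=
  lam ^ 2 + (α₁ : ℂ) * lam + (α₀ : ℂ) + (β₁ : ℂ) * Complex.exp (-lam * (τ₁ : ℂ))
    + (β₂ : ℂ) * Complex.exp (-lam * (τ₂ : ℂ))

set_option maxHeartbeats 1000000 in
/-- If `z ≠ 0` and `|β₁ − β₂| < |z| < β₁ + β₂` (strict triangle inequalities), then the set
of pairs `(u, v)` of unimodular complex numbers with `β₁u + β₂v = z` has exactly two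
elements, interchanged by the reflection `(u, v) ↦ ((z/|z|)²·conj u, (z/|z|)²·conj v)`
across the direction of `z`. Consequently, for a fixed Hopf frequency `ω > 0` in this
regime (`z = (ω² − α₀) − iα₁ω`), the delay pairs `(τ₁, τ₂)` solving `χ(iω) = 0` form,
modulo `2π/ω` in each component, exactly two branches. -/
theorem stmt11 (β₁ β₂ : ℝ) (hβ₁ : 0 < β₁) (hβ₂ : 0 < β₂)
    (z : ℂ) (hz : z ≠ 0)
    (h₁ : |β₁ - β₂| < ‖z‖) (h₂ : ‖z‖ < β₁ + β₂) :
    (∃ p q : ℂ × ℂ,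
      p ≠ q ∧
      {w : ℂ × ℂ | ‖w.1‖ = 1 ∧ ‖w.2‖ = 1 ∧
        (β₁ : ℂ) * w.1 + (β₂ : ℂ) * w.2 = z} = {p, q} ∧
      ((z / (‖z‖ : ℂ)) ^ 2 * (starRingEnd ℂ) p.1,
        (z / (‖z‖ : ℂ)) ^ 2 * (starRingEnd ℂ) p.2) = q ∧
      ((z / (‖z‖ : ℂ)) ^ 2 * (starRingEnd ℂ) q.1,
        (z / (‖z‖ : ℂ)) ^ 2 * (starRingEnd ℂ) q.2) = p) ∧
    (∀ α₀ α₁ ω : ℝ, 0 < ω →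
      z = ((ω ^ 2 - α₀ : ℝ) : ℂ) - Complex.I * ((α₁ * ω : ℝ) : ℂ) →
      ∃ a b : ℝ × ℝ,
        chi α₀ α₁ β₁ β₂ a.1 a.2 (Complex.I * (ω : ℂ)) = 0 ∧
        chi α₀ α₁ β₁ β₂ b.1 b.2 (Complex.I * (ω : ℂ)) = 0 ∧
        (¬ ∃ m n : ℤ, b.1 = a.1 + m * (2 * Real.pi / ω) ∧
          b.2 = a.2 + n * (2 * Real.pi / ω)) ∧
        ∀ τ : ℝ × ℝ, chi α₀ α₁ β₁ β₂ τ.1 τ.2 (Complex.I * (ω : ℂ)) = 0 →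
          ((∃ m n : ℤ, τ.1 = a.1 + m * (2 * Real.pi / ω) ∧
              τ.2 = a.2 + n * (2 * Real.pi / ω)) ∨
           (∃ m n : ℤ, τ.1 = b.1 + m * (2 * Real.pi / ω) ∧
              τ.2 = b.2 + n * (2 * Real.pi / ω)))) := by
  set r : ℝ := ‖z‖ with hrdef
  have hr0 : 0 < r := norm_pos_iff.mpr hz
  have hr0' : (r : ℂ) ≠ 0 := by exact_mod_cast ne_of_gt hr0
  have h1' : -r < β₁ - β₂ ∧ β₁ - β₂ < r := abs_lt.mp h₁
  set d : ℂ := z / (r : ℂ) with hddef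
  have hzrd : z = (r : ℂ) * d := by rw [hddef]; field_simp
  have hdabs : ‖d‖ = 1 := by
    rw [hddef, norm_div, Complex.norm_real, Real.norm_eq_abs, abs_of_pos hr0, ← hrdef]
    exact div_self (ne_of_gt hr0)
  have hd0 : d ≠ 0 := by
    intro h; rw [h, norm_zero] at hdabs; norm_num at hdabs
  have hdconj : d * (starRingEnd ℂ) d = 1 := by
    rw [Complex.mul_conj]
    rw [← Complex.sq_norm, hdabs]; norm_num
  set c : ℝ := (r ^ 2 + β₁ ^ 2 - β₂ ^ 2) / (2 * r * β₁) with hcdef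
  have hc : 2 * r * β₁ * c = r ^ 2 + β₁ ^ 2 - β₂ ^ 2 := by
    rw [hcdef]; field_simp
  have hc2 : c ^ 2 < 1 := by
    have key : (2 * r * β₁) ^ 2 * c ^ 2 = (r ^ 2 + β₁ ^ 2 - β₂ ^ 2) ^ 2 := by
      nlinarith [hc]
    have f1 : 0 < β₂ + β₁ - r := by linarith
    have f2 : 0 < β₂ + r - β₁ := by linarith [h1'.2]
    have f3 : 0 < r + β₁ - β₂ := by linarith [h1'.1]
    have f4 : 0 < r + β₁ + β₂ := by linarith
    have hprod : 0 < (β₂ + β₁ - r) * ((β₂ + r - β₁) * ((r + β₁ - β₂) * (r + β₁ + β₂))) := by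
      exact mul_pos f1 (mul_pos f2 (mul_pos f3 f4))
    nlinarith [key, hprod, sq_nonneg (2 * r * β₁)]
  set s : ℝ := Real.sqrt (1 - c ^ 2) with hsdef
  have hs2 : s ^ 2 = 1 - c ^ 2 := Real.sq_sqrt (by linarith)
  have hs0 : 0 < s := Real.sqrt_pos.mpr (by linarith)
  set w₁ : ℂ := (c : ℂ) + (s : ℂ) * Complex.I with hw1def
  set w₂ : ℂ := (c : ℂ) - (s : ℂ) * Complex.I with hw2def
  have hw1re : w₁.re = c := by simp [hw1def]
  have hw1im : w₁.im = s := by simp [hw1def]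
  have hw2re : w₂.re = c := by simp [hw2def]
  have hw2im : w₂.im = -s := by simp [hw2def]
  have hw1sq : w₁.re * w₁.re + w₁.im * w₁.im = 1 := by
    rw [hw1re, hw1im]; nlinarith [hs2]
  have hw2sq : w₂.re * w₂.re + w₂.im * w₂.im = 1 := by
    rw [hw2re, hw2im]; nlinarith [hs2]
  have hw1abs : ‖w₁‖ = 1 := by
    rw [Complex.norm_def, Complex.normSq_apply, hw1sq]
    exact Real.sqrt_one
  have hw2abs : ‖w₂‖ = 1 := by
    rw [Complex.norm_def, Complex.normSq_apply, hw2sq]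
    exact Real.sqrt_one
  set u₁ : ℂ := d * w₁ with hu1def
  set u₂ : ℂ := d * w₂ with hu2def
  set v₁ : ℂ := (z - (β₁ : ℂ) * u₁) / (β₂ : ℂ) with hv1def
  set v₂ : ℂ := (z - (β₁ : ℂ) * u₂) / (β₂ : ℂ) with hv2def
  have hβ₂0 : (β₂ : ℂ) ≠ 0 := by exact_mod_cast ne_of_gt hβ₂
  -- abs of the v's
  have hnsv : ∀ w : ℂ, w.re * w.re + w.im * w.im = 1 → w.re = c →
      Complex.normSq ((r : ℂ) - (β₁ : ℂ) * w) = β₂ ^ 2 := by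
    intro w hw2 hwre
    rw [Complex.normSq_apply]
    have e1 : ((r : ℂ) - (β₁ : ℂ) * w).re = r - β₁ * w.re := by simp
    have e2 : ((r : ℂ) - (β₁ : ℂ) * w).im = -(β₁ * w.im) := by simp
    rw [e1, e2]
    linear_combination β₁ ^ 2 * hw2 - hc - 2 * r * β₁ * hwre
  have habsv : ∀ w : ℂ, w.re * w.re + w.im * w.im = 1 → w.re = c →
      ‖(z - (β₁ : ℂ) * (d * w)) / (β₂ : ℂ)‖ = 1 := by
    intro w hw2 hwre
    have hfac : z - (β₁ : ℂ) * (d * w) = d * ((r : ℂ) - (β₁ : ℂ) * w) := by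
      rw [hzrd]; ring
    rw [norm_div, hfac, norm_mul, hdabs, one_mul, Complex.norm_def, hnsv w hw2 hwre,
      Real.sqrt_sq (le_of_lt hβ₂), Complex.norm_real, Real.norm_eq_abs, abs_of_pos hβ₂]
    exact div_self (ne_of_gt hβ₂)
  have hv1abs : ‖v₁‖ = 1 := habsv w₁ hw1sq hw1re
  have hv2abs : ‖v₂‖ = 1 := habsv w₂ hw2sq hw2re
  have he₁ : (β₁ : ℂ) * u₁ + (β₂ : ℂ) * v₁ = z := by
    rw [hv1def]; field_simp; ring
  have he₂ : (β₁ : ℂ) * u₂ + (β₂ : ℂ) * v₂ = z := by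
    rw [hv2def]; field_simp; ring
  have hu12 : u₁ ≠ u₂ := by
    intro h
    rw [hu1def, hu2def] at h
    have hww : w₁ = w₂ := mul_left_cancel₀ hd0 h
    have : s = -s := by
      have := congrArg Complex.im hww
      rw [hw1im, hw2im] at this
      exact this
    linarith
  -- the set equality
  have hset : {w : ℂ × ℂ | ‖w.1‖ = 1 ∧ ‖w.2‖ = 1 ∧
      (β₁ : ℂ) * w.1 + (β₂ : ℂ) * w.2 = z} = {(u₁, v₁), (u₂, v₂)} := by
    ext ⟨u, v⟩
    simp only [Set.mem_setOf_eq, Set.mem_insert_iff, Set.mem_singleton_iff,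
      Prod.mk.injEq]
    constructor
    · rintro ⟨hu, hv, he⟩
      set w : ℂ := (starRingEnd ℂ) d * u with hwdef
      have hdw : d * w = u := by
        rw [hwdef, ← mul_assoc, hdconj, one_mul]
      have hwabs : ‖w‖ = 1 := by
        rw [hwdef, norm_mul, Complex.norm_conj, hdabs, one_mul, hu]
      have hw2 : w.re * w.re + w.im * w.im = 1 := by
        have := Complex.sq_norm w
        rw [hwabs, Complex.normSq_apply] at this
        nlinarith
      have hsub : z - (β₁ : ℂ) * u = (β₂ : ℂ) * v := by
        linear_combination -he
      have hns : Complex.normSq ((r : ℂ) - (β₁ : ℂ) * w) = β₂ ^ 2 := by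
        have hfac : (r : ℂ) - (β₁ : ℂ) * w = (starRingEnd ℂ) d * (z - (β₁ : ℂ) * u) := by
          linear_combination (-(β₁ : ℂ)) * hwdef - (starRingEnd ℂ) d * hzrd - (r : ℂ) * hdconj
        rw [hfac, ← Complex.sq_norm, norm_mul, Complex.norm_conj, hdabs, one_mul,
          hsub, norm_mul, hv, mul_one, Complex.norm_real, Real.norm_eq_abs, abs_of_pos hβ₂]
      have hre : w.re = c := by
        rw [Complex.normSq_apply] at hns
        have e1 : ((r : ℂ) - (β₁ : ℂ) * w).re = r - β₁ * w.re := by simp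
        have e2 : ((r : ℂ) - (β₁ : ℂ) * w).im = -(β₁ * w.im) := by simp
        rw [e1, e2] at hns
        have h2rb : (2 : ℝ) * r * β₁ ≠ 0 := by positivity
        rw [hcdef, eq_div_iff h2rb]
        linear_combination β₁ ^ 2 * hw2 - hns
      have him : w.im = s ∨ w.im = -s := by
        have : (w.im - s) * (w.im + s) = 0 := by
          linear_combination hw2 - hs2 - (w.re + c) * hre
        rcases mul_eq_zero.mp this with h | h
        · left; linarith
        · right; linarith
      have hvval : v = (z - (β₁ : ℂ) * u) / (β₂ : ℂ) := by
        field_simp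
        linear_combination -hsub
      rcases him with h | h
      · left
        have hww : w = w₁ := Complex.ext (by rw [hre, hw1re]) (by rw [h, hw1im])
        constructor
        · rw [← hdw, hww]
        · rw [hvval, hv1def, ← hdw, hww]
      · right
        have hww : w = w₂ := Complex.ext (by rw [hre, hw2re]) (by rw [h, hw2im])
        constructor
        · rw [← hdw, hww]
        · rw [hvval, hv2def, ← hdw, hww]
    · rintro (⟨h1, h2⟩ | ⟨h1, h2⟩)
      · rw [h1, h2]; exact ⟨by rw [hu1def, norm_mul, hdabs, one_mul, hw1abs], hv1abs, he₁⟩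
      · rw [h1, h2]; exact ⟨by rw [hu2def, norm_mul, hdabs, one_mul, hw2abs], hv2abs, he₂⟩
  -- reflection facts
  have hzz : z * (starRingEnd ℂ) z = (r : ℂ) ^ 2 := by
    rw [Complex.mul_conj]
    norm_cast
    exact (Complex.sq_norm z).symm
  have hd2z : d ^ 2 * (starRingEnd ℂ) z = z := by
    rw [hddef]
    field_simp
    linear_combination hzz
  have hd2d : d ^ 2 * (starRingEnd ℂ) d = d := by
    calc d ^ 2 * (starRingEnd ℂ) d = d * (d * (starRingEnd ℂ) d) := by ring
    _ = d := by rw [hdconj, mul_one]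
  have hconjw1 : (starRingEnd ℂ) w₁ = w₂ := by
    rw [hw1def, hw2def, map_add, map_mul, Complex.conj_I, Complex.conj_ofReal,
      Complex.conj_ofReal]
    ring
  have hconjw2 : (starRingEnd ℂ) w₂ = w₁ := by
    rw [hw1def, hw2def, map_sub, map_mul, Complex.conj_I, Complex.conj_ofReal,
      Complex.conj_ofReal]
    ring
  have hrefl1 : d ^ 2 * (starRingEnd ℂ) u₁ = u₂ := by
    rw [hu1def, hu2def, map_mul, hconjw1, ← mul_assoc, hd2d]
  have hrefl2 : d ^ 2 * (starRingEnd ℂ) u₂ = u₁ := by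
    rw [hu1def, hu2def, map_mul, hconjw2, ← mul_assoc, hd2d]
  have hreflv : ∀ u u' : ℂ, d ^ 2 * (starRingEnd ℂ) u = u' →
      d ^ 2 * (starRingEnd ℂ) ((z - (β₁ : ℂ) * u) / (β₂ : ℂ))
        = (z - (β₁ : ℂ) * u') / (β₂ : ℂ) := by
    intro u u' h
    rw [map_div₀, map_sub, map_mul, Complex.conj_ofReal, Complex.conj_ofReal]
    linear_combination (hd2z - (β₁ : ℂ) * h) / (β₂ : ℂ)
  constructor
  · refine ⟨(u₁, v₁), (u₂, v₂), ?_, hset, ?_, ?_⟩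
    · intro h
      exact hu12 (congrArg Prod.fst h)
    · have := hreflv u₁ u₂ hrefl1
      simp only [hrdef]
      exact Prod.ext hrefl1 this
    · have := hreflv u₂ u₁ hrefl2
      exact Prod.ext hrefl2 this
  · intro α₀ α₁ ω hω hzeq
    have hω0 : (ω : ℝ) ≠ 0 := ne_of_gt hω
    have hωC : (ω : ℂ) ≠ 0 := by exact_mod_cast hω0
    have hIω : Complex.I * (ω : ℂ) ≠ 0 := mul_ne_zero Complex.I_ne_zero hωC
    -- chi = 0 iff the exponential equation
    have hchi : ∀ τ₁ τ₂ : ℝ, chi α₀ α₁ β₁ β₂ τ₁ τ₂ (Complex.I * (ω : ℂ)) = 0 ↔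
        (β₁ : ℂ) * Complex.exp (-(Complex.I * (ω : ℂ)) * (τ₁ : ℂ))
          + (β₂ : ℂ) * Complex.exp (-(Complex.I * (ω : ℂ)) * (τ₂ : ℂ)) = z := by
      intro τ₁ τ₂
      rw [chi, hzeq]
      constructor
      · intro h
        push_cast
        push_cast at h
        linear_combination h - (ω : ℂ) ^ 2 * Complex.I_sq
      · intro h
        push_cast at h ⊢
        linear_combination h + (ω : ℂ) ^ 2 * Complex.I_sq
    -- for unimodular u there is τ with exp(-(iω)τ) = u
    have hexp : ∀ u : ℂ, ‖u‖ = 1 →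
        Complex.exp (-(Complex.I * (ω : ℂ)) * ((-(Complex.arg u) / ω : ℝ) : ℂ)) = u := by
      intro u hu
      have harg : -(Complex.I * (ω : ℂ)) * ((-(Complex.arg u) / ω : ℝ) : ℂ)
          = (Complex.arg u : ℂ) * Complex.I := by
        push_cast
        field_simp
      rw [harg]
      have := Complex.norm_mul_exp_arg_mul_I u
      rw [hu] at this
      simpa using this
    -- periodicity
    have hper : ∀ (t : ℝ) (m : ℤ),
        Complex.exp (-(Complex.I * (ω : ℂ)) * ((t + m * (2 * Real.pi / ω) : ℝ) : ℂ))
          = Complex.exp (-(Complex.I * (ω : ℂ)) * (t : ℂ)) := by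
      intro t m
      push_cast
      rw [mul_add, Complex.exp_add]
      have : -(Complex.I * (ω : ℂ)) * ((m : ℂ) * (2 * (Real.pi : ℂ) / (ω : ℂ)))
          = ((-m : ℤ) : ℂ) * (2 * (Real.pi : ℂ) * Complex.I) := by
        push_cast
        field_simp
      rw [this, Complex.exp_int_mul_two_pi_mul_I, mul_one]
    -- from equality of exponentials to lattice shift
    have hlat : ∀ (t t' : ℝ),
        Complex.exp (-(Complex.I * (ω : ℂ)) * (t : ℂ))
          = Complex.exp (-(Complex.I * (ω : ℂ)) * (t' : ℂ)) →
        ∃ m : ℤ, t = t' + m * (2 * Real.pi / ω) := by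
      intro t t' h
      rw [Complex.exp_eq_exp_iff_exists_int] at h
      obtain ⟨n, hn⟩ := h
      refine ⟨-n, ?_⟩
      have him : -(ω * t) = -(ω * t') + (n : ℝ) * (2 * Real.pi) := by
        have := congrArg Complex.im hn
        simpa using this
      field_simp
      push_cast
      nlinarith [him]
    set a : ℝ × ℝ := (-(Complex.arg u₁) / ω, -(Complex.arg v₁) / ω) with hadef
    set b : ℝ × ℝ := (-(Complex.arg u₂) / ω, -(Complex.arg v₂) / ω) with hbdef
    have hu1abs : ‖u₁‖ = 1 := by rw [hu1def, norm_mul, hdabs, one_mul, hw1abs]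
    have hu2abs : ‖u₂‖ = 1 := by rw [hu2def, norm_mul, hdabs, one_mul, hw2abs]
    have hea1 : Complex.exp (-(Complex.I * (ω : ℂ)) * ((a.1 : ℝ) : ℂ)) = u₁ := hexp u₁ hu1abs
    have hea2 : Complex.exp (-(Complex.I * (ω : ℂ)) * ((a.2 : ℝ) : ℂ)) = v₁ := hexp v₁ hv1abs
    have heb1 : Complex.exp (-(Complex.I * (ω : ℂ)) * ((b.1 : ℝ) : ℂ)) = u₂ := hexp u₂ hu2abs
    have heb2 : Complex.exp (-(Complex.I * (ω : ℂ)) * ((b.2 : ℝ) : ℂ)) = v₂ := hexp v₂ hv2abs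
    refine ⟨a, b, ?_, ?_, ?_, ?_⟩
    · rw [hchi a.1 a.2, hea1, hea2]; exact he₁
    · rw [hchi b.1 b.2, heb1, heb2]; exact he₂
    · rintro ⟨m, n, hm, hn⟩
      apply hu12
      rw [← hea1, ← heb1, hm, hper]
    · intro τ hτ
      rw [hchi τ.1 τ.2] at hτ
      have hmem : (Complex.exp (-(Complex.I * (ω : ℂ)) * (τ.1 : ℂ)),
          Complex.exp (-(Complex.I * (ω : ℂ)) * (τ.2 : ℂ))) ∈
          ({(u₁, v₁), (u₂, v₂)} : Set (ℂ × ℂ)) := by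
        rw [← hset]
        refine ⟨?_, ?_, hτ⟩
        · rw [Complex.norm_exp]
          have : (-(Complex.I * (ω : ℂ)) * (τ.1 : ℂ)).re = 0 := by simp
          rw [this, Real.exp_zero]
        · rw [Complex.norm_exp]
          have : (-(Complex.I * (ω : ℂ)) * (τ.2 : ℂ)).re = 0 := by simp
          rw [this, Real.exp_zero]
      simp only [Set.mem_insert_iff, Set.mem_singleton_iff, Prod.mk.injEq] at hmem
      rcases hmem with ⟨h1, h2⟩ | ⟨h1, h2⟩
      · left
        obtain ⟨m, hm⟩ := hlat τ.1 a.1 (by rw [h1, hea1])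
        obtain ⟨n, hn⟩ := hlat τ.2 a.2 (by rw [h2, hea2])
        exact ⟨m, n, hm, hn⟩
      · right
        obtain ⟨m, hm⟩ := hlat τ.1 b.1 (by rw [h1, heb1])
        obtain ⟨n, hn⟩ := hlat τ.2 b.2 (by rw [h2, heb2])
        exact ⟨m, n, hm, hn⟩
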